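/- Let ρ_a, ρ_b : X → [0,∞) be measurable and integrable with Z_a := ∫ ρ_a dμ > 0 and Z_b := ∫ ρ_b dμ > 0, and let P_a, P_b be the probability measures with densities ρ_a/Z_a and ρ_b/Z_b. Let ρᴮ : X → [0,∞) be measurable with 0 < Zᴮ := ∫ ρᴮ dμ < ∞ and with ρᴮ(x) = 0 whenever ρ_a(x) = 0 or ρ_b(x) = 0, and define the ratios ρᴮ/ρ_a and ρᴮ/ρ_b to be 0 where the denominators vanish. Then E_{P_a}[ρᴮ(X)/ρ_a(X)] = Zᴮ/Z_a and E_{P_b}[ρᴮ(X)/ρ_b(X)] = Zᴮ/Z_b, and hence the bridge-sampling identity Z_b/Z_a = E_{P_a}[ρᴮ(X)/ρ_a(X)] / E_{P_b}[ρᴮ(X)/ρ_b(X)] holds. -/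

import Mathlib

open MeasureTheory Real

/-- Bridge sampling identity: `E_{P_a}[ρᴮ/ρ_a] = Zᴮ/Z_a`, `E_{P_b}[ρᴮ/ρ_b] = Zᴮ/Z_b`,
hence `Z_b/Z_a = E_{P_a}[ρᴮ/ρ_a] / E_{P_b}[ρᴮ/ρ_b]`. (Ratios are `0` where denominators
vanish, which is Lean's division convention.) -/
theorem bridge_sampling_identity
    {X : Type*} [MeasurableSpace X] (μ : Measure X) [SigmaFinite μ]
    (ρa ρb : X → ℝ) (hρa : Measurable ρa) (hρb : Measurable ρb)
    (hρanonneg : ∀ x, 0 ≤ ρa x) (hρbnonneg : ∀ x, 0 ≤ ρb x)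
    (hρaint : Integrable ρa μ) (hρbint : Integrable ρb μ)
    (Za Zb : ℝ) (hZa : Za = ∫ x, ρa x ∂μ) (hZb : Zb = ∫ x, ρb x ∂μ)
    (hZapos : 0 < Za) (hZbpos : 0 < Zb)
    (Pa Pb : Measure X)
    (hPa : Pa = μ.withDensity (fun x => ENNReal.ofReal (ρa x / Za)))
    (hPb : Pb = μ.withDensity (fun x => ENNReal.ofReal (ρb x / Zb)))
    (ρB : X → ℝ) (hρB : Measurable ρB) (hρBnonneg : ∀ x, 0 ≤ ρB x)
    (hρBint : Integrable ρB μ)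
    (ZB : ℝ) (hZB : ZB = ∫ x, ρB x ∂μ) (hZBpos : 0 < ZB)
    (hsupp : ∀ x, ρa x = 0 ∨ ρb x = 0 → ρB x = 0) :
    (∫ x, ρB x / ρa x ∂Pa) = ZB / Za
    ∧ (∫ x, ρB x / ρb x ∂Pb) = ZB / Zb
    ∧ Zb / Za = (∫ x, ρB x / ρa x ∂Pa) / (∫ x, ρB x / ρb x ∂Pb) := by
  subst hPa hPb
  have key : ∀ (ρ : X → ℝ) (Z : ℝ), Measurable ρ → (∀ x, 0 ≤ ρ x) →
      (∀ x, ρ x = 0 → ρB x = 0) → 0 < Z →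
      (∫ x, ρB x / ρ x ∂ (μ.withDensity (fun x => ENNReal.ofReal (ρ x / Z)))) =
        (∫ x, ρB x ∂μ) / Z := by
    intro ρ Z hm hnn hs hZ
    have h1 : (fun x => ENNReal.ofReal (ρ x / Z)) = fun x => (((ρ x / Z).toNNReal : NNReal) : ENNReal) := rfl
    rw [h1, integral_withDensity_eq_integral_smul ((hm.div_const Z).real_toNNReal)
      (fun x => ρB x / ρ x)]
    have h2 : ∀ x, (ρ x / Z).toNNReal • (ρB x / ρ x) = ρB x / Z := by
      intro x
      rw [NNReal.smul_def, Real.coe_toNNReal _ (div_nonneg (hnn x) hZ.le)]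
      by_cases h : ρ x = 0
      · simp [h, hs x h]
      · field_simp
        rw [smul_eq_mul, div_mul_div_comm, mul_div_assoc', div_eq_iff (mul_ne_zero hZ.ne' h)]
        ring
    simp_rw [h2]
    rw [integral_div]
  have ha := key ρa Za hρa hρanonneg (fun x h => hsupp x (Or.inl h)) hZapos
  have hb := key ρb Zb hρb hρbnonneg (fun x h => hsupp x (Or.inr h)) hZbpos
  rw [← hZB] at ha hb
  refine ⟨ha, hb, ?_⟩
  rw [ha, hb]
  field_simp
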